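/- Let σ² ≥ 0, b ∈ ℝ, k ≥ 0, let Λ be a measure on ℝ with ∫(1∧y²)Λ(dy) < ∞, and define κ(q) = -k + (σ²/2)q² + bq + ∫_ℝ (e^{qy} - 1 + q(1-e^y) + 1_{y<0}(1-e^y)^q) Λ(dy). Let ω > 0 satisfy κ(ω) = 0 and suppose κ(ω+q) < ∞ for all q ≥ 0. Let Λ̃ be the pushforward of 1_{y<0} Λ(dy) under y ↦ ln(1-e^y), and let Π(dx) = e^{ωx}(Λ(dx) + Λ̃(dx)). Then there exists b' ∈ ℝ such that for all q ≥ 0: κ(ω + q) = (σ²/2) q² + b' q + ∫_ℝ (e^{qx} - 1 + q(1-e^x)) Π(dx); in particular the shifted cumulant Φ(q) := κ(ω+q) is the Laplace exponent of an (unkilled) Lévy process with Gaussian coefficient σ² and Lévy measure Π. -/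

import Mathlib

open MeasureTheory Real


noncomputable def Af (s y : ℝ) : ℝ := Real.exp (s*y) - 1 + s*(1 - Real.exp y)
noncomputable def Cf (s y : ℝ) : ℝ := if y < 0 then (1 - Real.exp y)^s else 0

lemma measA (s : ℝ) : Measurable (Af s) := by
  unfold Af; fun_prop

lemma measC (s : ℝ) : Measurable (Cf s) := by
  unfold Cf
  exact Measurable.ite measurableSet_Iio ((measurable_const.sub measurable_exp).pow_const s) measurable_const

lemma Cf_eq_indicator (s : ℝ) :
    Cf s = Set.indicator (Set.Iio 0) (fun y => (1 - Real.exp y)^s) := by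
  funext y
  simp [Cf, Set.indicator, Set.mem_Iio]

-- pointwise bound on y ≤ 0
lemma absA_le {s : ℝ} (hs : 0 ≤ s) {y : ℝ} (hy : y ≤ 0) :
    |Af s y| ≤ (2*s^2 + s + 1) * min 1 (y^2) := by
  have hey : Real.exp y ≤ 1 := Real.exp_le_one_iff.mpr hy
  have hey0 : 0 < Real.exp y := Real.exp_pos y
  rcases le_or_gt (-1) y with h1 | h1
  · -- |y| ≤ 1
    have hy2 : y^2 ≤ 1 := by nlinarith
    have hmin : min 1 (y^2) = y^2 := min_eq_right hy2
    have hAy : Af s y = (Real.exp (s*y) - 1 - s*y) - s*(Real.exp y - 1 - y) := by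
      unfold Af; ring
    have h2 : |Real.exp y - 1 - y| ≤ y^2 := Real.abs_exp_sub_one_sub_id_le (by rw [abs_le]; constructor <;> linarith)
    have h3 : |Real.exp (s*y) - 1 - s*y| ≤ 2*s^2*y^2 := by
      rcases le_or_gt (|s*y|) 1 with h4 | h4
      · have := Real.abs_exp_sub_one_sub_id_le h4
        calc |Real.exp (s*y) - 1 - s*y| ≤ (s*y)^2 := this
          _ ≤ 2*s^2*y^2 := by nlinarith [sq_nonneg (s*y)]
      · -- s*y ≤ -1, so |y| ≥ 1/s, s|y| > 1
        have hsy : s*y ≤ 0 := mul_nonpos_of_nonneg_of_nonpos hs hy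
        have hsy1 : s*y < -1 := by
          rw [abs_of_nonpos hsy] at h4; linarith
        have hexp : 0 < Real.exp (s*y) := Real.exp_pos _
        have hexp1 : Real.exp (s*y) ≤ 1 := Real.exp_le_one_iff.mpr hsy
        have : |Real.exp (s*y) - 1 - s*y| ≤ 1 + (-(s*y)) := by
          rw [abs_le]; constructor <;> nlinarith
        have h5 : 1 ≤ -(s*y) := by linarith
        have h6 : -(s*y) ≤ s^2*y^2 := by nlinarith
        nlinarith
    calc |Af s y| ≤ |Real.exp (s*y) - 1 - s*y| + s * |Real.exp y - 1 - y| := by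
          rw [hAy]; calc _ ≤ |Real.exp (s*y) - 1 - s*y| + |s*(Real.exp y - 1 - y)| := abs_sub _ _
            _ = _ := by rw [abs_mul, abs_of_nonneg hs]
      _ ≤ 2*s^2*y^2 + s*y^2 := by nlinarith
      _ ≤ (2*s^2 + s + 1) * min 1 (y^2) := by rw [hmin]; nlinarith [sq_nonneg y]
  · -- y < -1, min = 1, |Af| ≤ 1 + s
    have hmin : min 1 (y^2) = 1 := min_eq_left (by nlinarith)
    have hsy : s*y ≤ 0 := mul_nonpos_of_nonneg_of_nonpos hs (le_of_lt (by linarith))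
    have h1' : 0 < Real.exp (s*y) := Real.exp_pos _
    have h2' : Real.exp (s*y) ≤ 1 := Real.exp_le_one_iff.mpr hsy
    have : |Af s y| ≤ 1 + s := by
      unfold Af; rw [abs_le]; constructor <;> nlinarith
    rw [hmin]; nlinarith [sq_nonneg s]

lemma min_int {Λ : Measure ℝ} (hΛ : ∫⁻ y, ENNReal.ofReal (min 1 (y ^ 2)) ∂Λ < ⊤) :
    Integrable (fun y => min 1 (y^2)) Λ := by
  refine ⟨(measurable_const.min (measurable_id.pow_const 2)).aestronglyMeasurable, ?_⟩
  rw [hasFiniteIntegral_iff_ofReal (ae_of_all _ fun y => le_min one_pos.le (sq_nonneg y))]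
  exact hΛ

lemma split_int {Λ : Measure ℝ} (hΛ : ∫⁻ y, ENNReal.ofReal (min 1 (y ^ 2)) ∂Λ < ⊤)
    {s : ℝ} (hs : 0 ≤ s) (hf : Integrable (fun y => Af s y + Cf s y) Λ) :
    Integrable (Af s) Λ ∧ Integrable (Cf s) Λ := by
  have hA_on : IntegrableOn (Af s) (Set.Iio 0) Λ := by
    refine Integrable.mono' (((min_int hΛ).const_mul (2*s^2+s+1)).restrict)
      (measA s).aestronglyMeasurable ?_
    refine (ae_restrict_iff' measurableSet_Iio).mpr (ae_of_all _ fun y hy => ?_)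
    simpa [Real.norm_eq_abs] using absA_le hs (le_of_lt hy)
  have hC_on : IntegrableOn (fun y => (1 - Real.exp y)^s) (Set.Iio 0) Λ := by
    refine ((hf.restrict).sub hA_on).congr ?_
    refine (ae_restrict_iff' measurableSet_Iio).mpr (ae_of_all _ fun y hy => ?_)
    simp only [Set.mem_Iio] at hy
    simp [Cf, if_pos hy]
  have hC : Integrable (Cf s) Λ := by
    rw [Cf_eq_indicator]
    exact (integrable_indicator_iff measurableSet_Iio).mpr hC_on
  refine ⟨?_, hC⟩
  have h2 := hf.sub hC
  exact h2.congr (ae_of_all _ fun y => by simp)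

/-- Lévy–Khintchine representation of the cumulant function shifted at a root `ω`: if
`κ(ω) = 0` and `κ(ω+q) < ∞` for all `q ≥ 0`, then with `Λ̃` the pushforward of
`1_{y<0}Λ(dy)` under `y ↦ ln(1-e^y)` and `Pi0(dx) = e^{ωx}(Λ(dx) + Λ̃(dx))`, there is
`b' ∈ ℝ` with `κ(ω+q) = (σ²/2)q² + b'q + ∫ (e^{qx} - 1 + q(1-e^x)) Pi0(dx)` for all
`q ≥ 0`; moreover `∫ (1∧x²) Pi0(dx) < ∞`. -/
theorem stmt17 (σ2 b k ω : ℝ) (hσ : 0 ≤ σ2) (hk : 0 ≤ k) (hω : 0 < ω)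
    (Λ : Measure ℝ)
    (hΛ : ∫⁻ y, ENNReal.ofReal (min 1 (y ^ 2)) ∂Λ < ⊤)
    (κ : ℝ → ℝ)
    (hκ : ∀ q : ℝ, κ q = -k + σ2 / 2 * q ^ 2 + b * q
      + ∫ y, (Real.exp (q * y) - 1 + q * (1 - Real.exp y)
          + (if y < 0 then (1 - Real.exp y) ^ q else 0)) ∂Λ)
    (hroot : κ ω = 0)
    (hfin : ∀ q : ℝ, 0 ≤ q →
      Integrable (fun y => Real.exp ((ω + q) * y) - 1 + (ω + q) * (1 - Real.exp y)
        + (if y < 0 then (1 - Real.exp y) ^ (ω + q) else 0)) Λ) :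
    ∀ (Λtilde : Measure ℝ),
      Λtilde = Measure.map (fun y => Real.log (1 - Real.exp y)) (Λ.restrict (Set.Iio 0)) →
    ∀ (Pi0 : Measure ℝ),
      Pi0 = (Λ + Λtilde).withDensity (fun x => ENNReal.ofReal (Real.exp (ω * x))) →
    (∫⁻ x, ENNReal.ofReal (min 1 (x ^ 2)) ∂Pi0 < ⊤) ∧
    ∃ b' : ℝ, ∀ q : ℝ, 0 ≤ q →
      κ (ω + q) = σ2 / 2 * q ^ 2 + b' * q
        + ∫ x, (Real.exp (q * x) - 1 + q * (1 - Real.exp x)) ∂Pi0 := by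
  intro Λtilde hΛt Pi0 hPi0
  -- notation
  set L : ℝ → ℝ := fun y => Real.log (1 - Real.exp y) with hLdef
  have hL : Measurable L := (measurable_const.sub measurable_exp).log
  set ρ : ℝ → NNReal := fun x => Real.toNNReal (Real.exp (ω*x)) with hρdef
  have hρ : Measurable ρ := measurable_real_toNNReal.comp
    (measurable_exp.comp (measurable_const.mul measurable_id))
  have hρcoe : ∀ x, (ρ x : ℝ) = Real.exp (ω*x) := fun x =>
    Real.coe_toNNReal _ (Real.exp_nonneg _)
  have hPi0' : Pi0 = Λ.withDensity (fun x => (ρ x : ENNReal))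
      + Λtilde.withDensity (fun x => (ρ x : ENNReal)) := by
    rw [hPi0, withDensity_add_measure]; rfl
  -- integrability of the basic blocks
  have hfs : ∀ s : ℝ, ω ≤ s → Integrable (fun y => Af s y + Cf s y) Λ := by
    intro s hs
    have := hfin (s - ω) (by linarith)
    rw [add_sub_cancel] at this
    exact this
  have hAC : ∀ s : ℝ, ω ≤ s → Integrable (Af s) Λ ∧ Integrable (Cf s) Λ :=
    fun s hs => split_int hΛ (le_trans hω.le hs) (hfs s hs)
  have hAω := (hAC ω le_rfl).1
  have hCω := (hAC ω le_rfl).2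
  have hA1 := (hAC (ω+1) (by linarith)).1
  have hC1 := (hAC (ω+1) (by linarith)).2
  -- the drift correction integrand
  set Jf : ℝ → ℝ := fun y => Af (ω+1) y - Af ω y - Cf ω y + Cf (ω+1) y with hJdef
  have hJf : Integrable Jf Λ := ((hA1.sub hAω).sub hCω).add hC1
  constructor
  · -- finiteness of ∫ (1 ∧ x²) dPi0
    have hg : Measurable fun x : ℝ => ENNReal.ofReal (min 1 (x^2)) :=
      ENNReal.measurable_ofReal.comp (measurable_const.min (measurable_id.pow_const 2))
    have hfd : Measurable fun x : ℝ => ENNReal.ofReal (Real.exp (ω*x)) :=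
      ENNReal.measurable_ofReal.comp (measurable_exp.comp (measurable_const.mul measurable_id))
    rw [hPi0, lintegral_withDensity_eq_lintegral_mul _ hfd hg, lintegral_add_measure]
    simp only [Pi.mul_apply]
    have hmin_nonneg : ∀ x : ℝ, 0 ≤ min 1 (x^2) := fun x => le_min zero_le_one (sq_nonneg x)
    have habs : ∀ (F : ℝ → ℝ) (hF : Integrable F Λ),
        ∫⁻ x, ENNReal.ofReal |F x| ∂Λ < ⊤ := by
      intro F hF
      have := hF.hasFiniteIntegral
      refine lt_of_le_of_lt (le_of_eq (lintegral_congr fun x => ?_)) this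
      rw [← ofReal_norm_eq_enorm, Real.norm_eq_abs]
    have hminlt : ∀ c : ℝ, ∫⁻ x, ENNReal.ofReal (c * min 1 (x^2)) ∂Λ < ⊤ := by
      intro c
      rcases le_or_gt c 0 with hc | hc
      · have hz : ∀ x : ℝ, ENNReal.ofReal (c * min 1 (x^2)) = 0 := fun x =>
          ENNReal.ofReal_eq_zero.mpr (mul_nonpos_of_nonpos_of_nonneg hc (hmin_nonneg x))
        rw [lintegral_congr hz, lintegral_zero]
        simp
      · have : ∀ x : ℝ, ENNReal.ofReal (c * min 1 (x^2))
            = ENNReal.ofReal c * ENNReal.ofReal (min 1 (x^2)) := fun x =>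
          ENNReal.ofReal_mul hc.le
        rw [lintegral_congr this, lintegral_const_mul _ hg]
        exact ENNReal.mul_lt_top ENNReal.ofReal_lt_top hΛ
    have hApart : ∫⁻ x, ENNReal.ofReal (Real.exp (ω*x)) * ENNReal.ofReal (min 1 (x^2)) ∂Λ < ⊤ := by
      set A0 : ℝ := max 1 (Real.log (ω+3)) with hA0
      have hb1 : ∀ x : ℝ, Real.exp (ω*x) * min 1 (x^2)
          ≤ Real.exp (ω*A0) * min 1 (x^2) + |Af (ω+2) x + Cf (ω+2) x| := by
        intro x
        rcases le_or_gt x A0 with hx | hx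
        · have h1 : Real.exp (ω*x) ≤ Real.exp (ω*A0) :=
            Real.exp_le_exp.mpr (mul_le_mul_of_nonneg_left hx hω.le)
          nlinarith [hmin_nonneg x, abs_nonneg (Af (ω+2) x + Cf (ω+2) x), Real.exp_pos (ω*x)]
        · have hx1 : (1:ℝ) ≤ x := le_trans (le_max_left _ _) hx.le
          have hmin1 : min 1 (x^2) = 1 := min_eq_left (by nlinarith)
          have hC0 : Cf (ω+2) x = 0 := if_neg (by push_neg; linarith)
          have hu : ω + 3 ≤ Real.exp x := by
            rw [show ω + 3 = Real.exp (Real.log (ω+3)) from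
              (Real.exp_log (by linarith)).symm]
            exact Real.exp_le_exp.mpr (le_trans (le_max_right _ _) hx.le)
          have hv : (1:ℝ) ≤ Real.exp (ω*x) := Real.one_le_exp (by positivity)
          have he : Real.exp ((ω+2)*x) = Real.exp (ω*x) * Real.exp x * Real.exp x := by
            rw [show (ω+2)*x = ω*x + x + x by ring, Real.exp_add, Real.exp_add]
          have hAf : Real.exp (ω*x) ≤ Af (ω+2) x := by
            simp only [Af]
            rw [he]
            nlinarith [mul_nonneg (by linarith : (0:ℝ) ≤ Real.exp (ω*x) - 1)
              (by nlinarith : (0:ℝ) ≤ Real.exp x * Real.exp x - 1),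
              sq_nonneg (Real.exp x)]
          have : Real.exp (ω*x) ≤ |Af (ω+2) x + Cf (ω+2) x| := by
            rw [hC0, add_zero]
            exact le_trans hAf (le_abs_self _)
          rw [hmin1]
          nlinarith [Real.exp_pos (ω*A0)]
      calc ∫⁻ x, ENNReal.ofReal (Real.exp (ω*x)) * ENNReal.ofReal (min 1 (x^2)) ∂Λ
          ≤ ∫⁻ x, (ENNReal.ofReal (Real.exp (ω*A0) * min 1 (x^2))
              + ENNReal.ofReal (|Af (ω+2) x + Cf (ω+2) x|)) ∂Λ := by
            refine lintegral_mono fun x => ?_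
            rw [← ENNReal.ofReal_mul (Real.exp_nonneg _)]
            exact le_trans (ENNReal.ofReal_le_ofReal (hb1 x)) (ENNReal.ofReal_add_le)
        _ = ∫⁻ x, ENNReal.ofReal (Real.exp (ω*A0) * min 1 (x^2)) ∂Λ
              + ∫⁻ x, ENNReal.ofReal (|Af (ω+2) x + Cf (ω+2) x|) ∂Λ :=
            lintegral_add_left (ENNReal.measurable_ofReal.comp
              ((measurable_const.mul (measurable_const.min (measurable_id.pow_const 2))))) _
        _ < ⊤ := ENNReal.add_lt_top.mpr
            ⟨hminlt _, habs _ (hfs (ω+2) (by linarith))⟩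
    have hBpart : ∫⁻ x, ENNReal.ofReal (Real.exp (ω*x)) * ENNReal.ofReal (min 1 (x^2)) ∂Λtilde
        < ⊤ := by
      rw [hΛt, lintegral_map (f := fun x => ENNReal.ofReal (Real.exp (ω*x)) * ENNReal.ofReal (min 1 (x^2))) (hfd.mul hg) hL]
      have hb2 : ∀ y ∈ Set.Iio (0:ℝ),
          ENNReal.ofReal (Real.exp (ω * L y)) * ENNReal.ofReal (min 1 ((L y)^2))
          ≤ ENNReal.ofReal (|Af ω y + Cf ω y|)
            + ENNReal.ofReal ((2*ω^2+ω+1) * min 1 (y^2)) := by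
        intro y hy
        rw [Set.mem_Iio] at hy
        have hx : (0:ℝ) < 1 - Real.exp y := by
          have := Real.exp_lt_one_iff.mpr hy; linarith
        have e4 : Real.exp (ω * L y) = (1 - Real.exp y) ^ ω := by
          rw [Real.rpow_def_of_pos hx, mul_comm]
        have hr : Real.exp (ω * L y) * min 1 ((L y)^2) ≤ (1 - Real.exp y) ^ ω := by
          rw [e4]
          calc (1 - Real.exp y) ^ ω * min 1 ((L y)^2) ≤ (1 - Real.exp y) ^ ω * 1 :=
              mul_le_mul_of_nonneg_left (min_le_left _ _) (Real.rpow_nonneg hx.le ω)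
            _ = (1 - Real.exp y) ^ ω := mul_one _
        have hCeq : (1 - Real.exp y) ^ ω = (Af ω y + Cf ω y) - Af ω y := by
          simp only [Cf, if_pos hy]; ring
        have hr2 : Real.exp (ω * L y) * min 1 ((L y)^2)
            ≤ |Af ω y + Cf ω y| + (2*ω^2+ω+1) * min 1 (y^2) := by
          have h5 := absA_le hω.le (le_of_lt hy)
          have h6 : (1 - Real.exp y) ^ ω ≤ |Af ω y + Cf ω y| + |Af ω y| := by
            rw [hCeq]
            have h7 := le_abs_self (Af ω y + Cf ω y)
            have h8 := neg_abs_le (Af ω y)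
            linarith
          linarith [h5, h6, hr]
        rw [← ENNReal.ofReal_mul (Real.exp_nonneg _), ← ENNReal.ofReal_add (abs_nonneg _)
          (by positivity)]
        exact ENNReal.ofReal_le_ofReal hr2
      calc ∫⁻ y in Set.Iio 0, ENNReal.ofReal (Real.exp (ω * L y))
            * ENNReal.ofReal (min 1 ((L y)^2)) ∂Λ
          ≤ ∫⁻ y in Set.Iio 0, (ENNReal.ofReal (|Af ω y + Cf ω y|)
              + ENNReal.ofReal ((2*ω^2+ω+1) * min 1 (y^2))) ∂Λ := by
            refine lintegral_mono_ae ((ae_restrict_iff' measurableSet_Iio).mpr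
              (ae_of_all _ hb2))
        _ ≤ ∫⁻ y, (ENNReal.ofReal (|Af ω y + Cf ω y|)
              + ENNReal.ofReal ((2*ω^2+ω+1) * min 1 (y^2))) ∂Λ :=
            lintegral_mono' Measure.restrict_le_self le_rfl
        _ = ∫⁻ y, ENNReal.ofReal (|Af ω y + Cf ω y|) ∂Λ
              + ∫⁻ y, ENNReal.ofReal ((2*ω^2+ω+1) * min 1 (y^2)) ∂Λ :=
            lintegral_add_left (ENNReal.measurable_ofReal.comp
              (((measA ω).add (measC ω)).abs)) _
        _ < ⊤ := ENNReal.add_lt_top.mpr ⟨habs _ (hfs ω le_rfl), hminlt _⟩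
    exact ENNReal.add_lt_top.mpr ⟨hApart, hBpart⟩
  refine ⟨σ2*ω + b + ∫ y, Jf y ∂Λ, ?_⟩
  intro q hq
  have hAq := (hAC (ω+q) (by linarith)).1
  have hCq := (hAC (ω+q) (by linarith)).2
  set T1 : ℝ → ℝ := fun y => Real.exp (ω*y) * Af q y with hT1def
  set T2 : ℝ → ℝ := Set.indicator (Set.Iio 0) (fun y => Real.exp (ω * L y) * Af q (L y))
    with hT2def
  have hT1eq : ∀ y, T1 y = Af (ω+q) y - Af ω y - q*(Af (ω+1) y - Af ω y) := by
    intro y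
    simp only [hT1def, Af]
    rw [add_mul, Real.exp_add, add_mul ω 1 y, Real.exp_add]
    ring
  have hT1 : Integrable T1 Λ := by
    refine (((hAq.sub hAω).sub ((hA1.sub hAω).const_mul q))).congr
      (ae_of_all _ fun y => ?_)
    simp only [Pi.sub_apply]
    exact (hT1eq y).symm
  -- master pointwise identity
  have PI : ∀ y, Af (ω+q) y + Cf (ω+q) y - (Af ω y + Cf ω y)
      = T1 y + T2 y + q * Jf y := by
    intro y
    by_cases hy : y < 0
    · have hx : (0:ℝ) < 1 - Real.exp y := by
        have := Real.exp_lt_one_iff.mpr hy; linarith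
      have e3 : Real.exp (L y) = 1 - Real.exp y := Real.exp_log hx
      have e4 : Real.exp (ω * L y) = (1 - Real.exp y) ^ ω := by
        rw [Real.rpow_def_of_pos hx, mul_comm]
      have e5 : Real.exp (q * L y) = (1 - Real.exp y) ^ q := by
        rw [Real.rpow_def_of_pos hx, mul_comm]
      have e6 : (1 - Real.exp y) ^ (ω+q) = (1 - Real.exp y) ^ ω * (1 - Real.exp y) ^ q :=
        Real.rpow_add hx ω q
      have e7 : (1 - Real.exp y) ^ (ω+1) = (1 - Real.exp y) ^ ω * (1 - Real.exp y) := by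
        rw [Real.rpow_add hx ω 1, Real.rpow_one]
      rw [hT2def, Set.indicator_of_mem (Set.mem_Iio.mpr hy)]
      simp only [hT1def, hJdef, Af, Cf, if_pos hy]
      rw [add_mul, Real.exp_add, add_mul ω 1 y, Real.exp_add, e3, e4, e5, e6, e7]
      ring
    · rw [hT2def, Set.indicator_of_notMem (by simpa using hy)]
      simp only [hT1def, hJdef, Af, Cf, if_neg hy]
      rw [add_mul, Real.exp_add, add_mul ω 1 y, Real.exp_add]
      ring
  have hG : Integrable (fun y => (Af (ω+q) y + Cf (ω+q) y) - (Af ω y + Cf ω y)) Λ :=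
    (hfs (ω+q) (by linarith)).sub (hfs ω le_rfl)
  have hT2 : Integrable T2 Λ := by
    refine ((hG.sub hT1).sub (hJf.const_mul q)).congr (ae_of_all _ fun y => ?_)
    have := PI y
    simp only [Pi.sub_apply]
    linarith
  -- identify the Pi0 integral
  have hsmul : ∀ x, ρ x • Af q x = T1 x := by
    intro x; rw [NNReal.smul_def, hρcoe, smul_eq_mul]
  have hm : Measurable fun x => ρ x • Af q x := by
    have : (fun x => ρ x • Af q x) = T1 := funext hsmul
    rw [this, hT1def]
    exact (measurable_exp.comp (measurable_const.mul measurable_id)).mul (measA q)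
  have hIsΛ : Integrable (fun x => ρ x • Af q x) Λ :=
    hT1.congr (ae_of_all _ fun x => (hsmul x).symm)
  have hcompInt : Integrable ((fun x => ρ x • Af q x) ∘ L) (Λ.restrict (Set.Iio 0)) := by
    have h1 : IntegrableOn (fun y => Real.exp (ω * L y) * Af q (L y)) (Set.Iio 0) Λ :=
      (integrable_indicator_iff measurableSet_Iio).mp (hT2def ▸ hT2)
    refine h1.congr (ae_of_all _ fun y => ?_)
    simp only [Function.comp, NNReal.smul_def, hρcoe, smul_eq_mul]
  have hIsΛt : Integrable (fun x => ρ x • Af q x) Λtilde := by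
    rw [hΛt]
    exact (integrable_map_measure hm.aestronglyMeasurable hL.aemeasurable).mpr hcompInt
  have hIρΛ : Integrable (Af q) (Λ.withDensity fun x => (ρ x : ENNReal)) :=
    (integrable_withDensity_iff_integrable_smul hρ).mpr hIsΛ
  have hIρΛt : Integrable (Af q) (Λtilde.withDensity fun x => (ρ x : ENNReal)) :=
    (integrable_withDensity_iff_integrable_smul hρ).mpr hIsΛt
  have hPint : ∫ x, (Real.exp (q*x) - 1 + q*(1 - Real.exp x)) ∂Pi0
      = ∫ y, T1 y ∂Λ + ∫ y, T2 y ∂Λ := by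
    have h0 : ∫ x, (Real.exp (q*x) - 1 + q*(1 - Real.exp x)) ∂Pi0 = ∫ x, Af q x ∂Pi0 := rfl
    rw [h0, hPi0', integral_add_measure hIρΛ hIρΛt,
      integral_withDensity_eq_integral_smul hρ, integral_withDensity_eq_integral_smul hρ]
    congr 1
    · exact integral_congr_ae (ae_of_all _ hsmul)
    · rw [hΛt, integral_map hL.aemeasurable hm.aestronglyMeasurable]
      rw [hT2def, integral_indicator measurableSet_Iio]
      refine integral_congr_ae (ae_of_all _ fun y => ?_)
      simp only [Function.comp, NNReal.smul_def, hρcoe, smul_eq_mul]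
  -- integral of the difference
  have hsub : ∫ y, (Af (ω+q) y + Cf (ω+q) y) ∂Λ - ∫ y, (Af ω y + Cf ω y) ∂Λ
      = ∫ y, T1 y ∂Λ + ∫ y, T2 y ∂Λ + q * ∫ y, Jf y ∂Λ := by
    rw [← integral_sub (hfs (ω+q) (by linarith)) (hfs ω le_rfl)]
    rw [show (fun y => (Af (ω+q) y + Cf (ω+q) y) - (Af ω y + Cf ω y))
        = fun y => T1 y + T2 y + q * Jf y from funext PI]
    have h12 : Integrable (fun y => T1 y + T2 y) Λ := hT1.add hT2
    have hJq : Integrable (fun y => q * Jf y) Λ := hJf.const_mul q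
    rw [integral_add h12 hJq, integral_add hT1 hT2, integral_const_mul]
  have hκq : κ (ω+q) = -k + σ2 / 2 * (ω+q) ^ 2 + b * (ω+q)
      + ∫ y, (Af (ω+q) y + Cf (ω+q) y) ∂Λ := hκ (ω+q)
  have hκω : κ ω = -k + σ2 / 2 * ω ^ 2 + b * ω + ∫ y, (Af ω y + Cf ω y) ∂Λ := hκ ω
  rw [hroot] at hκω
  rw [hPint, hκq]
  linear_combination hsub - hκω
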